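/- Fix an integer r ≥ 1 and for θ ∈ [0,π] let λ_1(θ) ≤ ⋯ ≤ λ_r(θ) denote the eigenvalues of Δ_θ^r in nondecreasing order, counted with multiplicity. Then for every 1 ≤ j ≤ r and each endpoint φ ∈ {0, π}, the function λ_j has a one-sided derivative at φ from within [0,π] (right-sided at 0, left-sided at π), and this one-sided derivative d satisfies |d| = (1/r)·√(4 − λ_j(φ)²). -/

import Mathlib

/-- The r×r matrix Δ_θ^r: ones on the off-diagonals, with twisted corner entries
e^{-iθ} (top-right) and e^{iθ} (bottom-left).  For r = 1 this gives (2cos θ) and for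
r = 2 it gives [[0, 1+e^{-iθ}],[1+e^{iθ}, 0]]. -/
noncomputable def deltaMatrix (r : ℕ) (θ : ℝ) : Matrix (Fin r) (Fin r) ℂ :=
  Matrix.of fun j k =>
    (if (j : ℤ) - (k : ℤ) = 1 ∨ (k : ℤ) - (j : ℤ) = 1 then 1 else 0)
    + (if (j : ℕ) = 0 ∧ (k : ℕ) = r - 1 then Complex.exp (-(Complex.I * (θ : ℂ))) else 0)
    + (if (j : ℕ) = r - 1 ∧ (k : ℕ) = 0 then Complex.exp (Complex.I * (θ : ℂ)) else 0)

section DEaux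
open Polynomial

def tDE (r j : ℕ) : ℤ := if (j + 1) % 2 = r % 2 then -((j : ℤ) + 1) else (j : ℤ)

noncomputable def fDE (r j : ℕ) (θ : ℝ) : ℝ :=
  -2 * Real.cos ((θ + Real.pi * (tDE r j : ℝ)) / r)

lemma tDE_even (r j : ℕ) : ∃ m : ℤ, (tDE r j) + r = 2 * m := by
  have h : (2 : ℤ) ∣ tDE r j + r := by unfold tDE; split <;> omega
  exact h

lemma fDE_eigen (r : ℕ) (hr : 1 ≤ r) (j : ℕ) (θ : ℝ) :
    ∃ v : Fin r → ℂ, v ≠ 0 ∧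
      (deltaMatrix r θ).mulVec v = ((fDE r j θ : ℝ) : ℂ) • v := by
  have hrR : (r : ℝ) ≠ 0 := by positivity
  set α : ℝ := (θ + Real.pi * (tDE r j : ℝ)) / r + Real.pi with hα
  set ω : ℂ := Complex.exp (Complex.I * α) with hω
  have hω0 : ω ≠ 0 := Complex.exp_ne_zero _
  obtain ⟨m, hm⟩ := tDE_even r j
  have h2 : ((tDE r j : ℝ)) + r = 2 * m := by exact_mod_cast hm
  have hra : (r : ℝ) * α = θ + m * (2 * Real.pi) := by
    rw [hα, mul_add, mul_div_cancel₀ _ hrR]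
    linear_combination Real.pi * h2
  have hωr : ω ^ r = Complex.exp (Complex.I * θ) := by
    rw [hω, ← Complex.exp_nat_mul]
    have h3 : ((r : ℝ) * α : ℂ) = ((θ + m * (2 * Real.pi) : ℝ) : ℂ) := by
      exact_mod_cast congrArg (fun x : ℝ => (x : ℂ)) hra
    have h4 : (r : ℂ) * (Complex.I * (α : ℂ)) =
        Complex.I * (θ : ℂ) + (m : ℂ) * (2 * (Real.pi : ℂ) * Complex.I) := by
      push_cast at h3
      linear_combination Complex.I * h3
    rw [h4, Complex.exp_add, Complex.exp_int_mul_two_pi_mul_I, mul_one]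
  have hsum : ((fDE r j θ : ℝ) : ℂ) = ω + ω⁻¹ := by
    have h1 : Real.cos α = -Real.cos ((θ + Real.pi * tDE r j) / r) := by
      rw [hα, Real.cos_add, Real.cos_pi, Real.sin_pi]; ring
    have h2' : (fDE r j θ) = 2 * Real.cos α := by rw [fDE, h1]; ring
    rw [h2', hω, ← Complex.exp_neg]
    push_cast
    rw [Complex.two_cos]
    simp only [mul_comm (α : ℂ) Complex.I]
    rw [neg_mul, mul_comm (α : ℂ) Complex.I]
  refine ⟨fun k => ω ^ (k : ℕ), ?_, ?_⟩
  · intro h0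
    have h1 := congrFun h0 (⟨0, by omega⟩ : Fin r)
    simp at h1
  · funext mm
    simp only [Matrix.mulVec, dotProduct, Pi.smul_apply, smul_eq_mul]
    have hent : ∀ k : Fin r, deltaMatrix r θ mm k =
        (if (mm : ℤ) - (k : ℤ) = 1 then (1:ℂ) else 0)
        + (if (k : ℤ) - (mm : ℤ) = 1 then (1:ℂ) else 0)
        + (if (mm : ℕ) = 0 ∧ (k : ℕ) = r - 1 then Complex.exp (-(Complex.I * θ)) else 0)
        + (if (mm : ℕ) = r - 1 ∧ (k : ℕ) = 0 then Complex.exp (Complex.I * θ) else 0) := by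
      intro k
      show (if _ ∨ _ then (1:ℂ) else 0) + _ + _ = _
      have : (if (mm : ℤ) - (k : ℤ) = 1 ∨ (k : ℤ) - (mm : ℤ) = 1 then (1:ℂ) else 0)
          = (if (mm : ℤ) - (k : ℤ) = 1 then (1:ℂ) else 0)
          + (if (k : ℤ) - (mm : ℤ) = 1 then (1:ℂ) else 0) := by
        by_cases h1 : (mm : ℤ) - (k : ℤ) = 1 <;> by_cases h2 : (k : ℤ) - (mm : ℤ) = 1
        · exfalso; omega
        all_goals simp [h1, h2]
      rw [this]
    have hsplit : ∑ k : Fin r, deltaMatrix r θ mm k * ω ^ (k : ℕ)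
        = (∑ k : Fin r, (if (mm : ℤ) - (k : ℤ) = 1 then ω ^ (k : ℕ) else 0))
        + (∑ k : Fin r, (if (k : ℤ) - (mm : ℤ) = 1 then ω ^ (k : ℕ) else 0))
        + (∑ k : Fin r, (if (mm : ℕ) = 0 ∧ (k : ℕ) = r - 1 then
            Complex.exp (-(Complex.I * θ)) * ω ^ (k : ℕ) else 0))
        + (∑ k : Fin r, (if (mm : ℕ) = r - 1 ∧ (k : ℕ) = 0 then
            Complex.exp (Complex.I * θ) * ω ^ (k : ℕ) else 0)) := by
      rw [← Finset.sum_add_distrib, ← Finset.sum_add_distrib, ← Finset.sum_add_distrib]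
      refine Finset.sum_congr rfl fun k _ => ?_
      rw [hent k]
      simp only [add_mul, ite_mul, one_mul, zero_mul]
    have hS1 : (∑ k : Fin r, (if (mm : ℤ) - (k : ℤ) = 1 then ω ^ (k : ℕ) else 0))
        = if 1 ≤ (mm : ℕ) then ω ^ ((mm : ℕ) - 1) else 0 := by
      by_cases hm1 : 1 ≤ (mm : ℕ)
      · rw [if_pos hm1, Finset.sum_eq_single_of_mem (⟨(mm : ℕ) - 1, by omega⟩ : Fin r)
          (Finset.mem_univ _)]
        · rw [if_pos (by first | (simp; omega) | simp | omega)]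
        · intro b _ hb
          rw [if_neg]
          intro hc
          exact hb (Fin.ext (by first | (simp; omega) | simp | omega))
      · rw [if_neg hm1]
        refine Finset.sum_eq_zero fun k _ => ?_
        rw [if_neg]; omega
    have hS2 : (∑ k : Fin r, (if (k : ℤ) - (mm : ℤ) = 1 then ω ^ (k : ℕ) else 0))
        = if (mm : ℕ) + 1 ≤ r - 1 then ω ^ ((mm : ℕ) + 1) else 0 := by
      by_cases hm1 : (mm : ℕ) + 1 ≤ r - 1
      · rw [if_pos hm1, Finset.sum_eq_single_of_mem (⟨(mm : ℕ) + 1, by omega⟩ : Fin r)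
          (Finset.mem_univ _)]
        · rw [if_pos (by first | (simp; omega) | simp | omega)]
        · intro b _ hb
          rw [if_neg]
          intro hc
          exact hb (Fin.ext (by first | (simp; omega) | simp | omega))
      · rw [if_neg hm1]
        refine Finset.sum_eq_zero fun k _ => ?_
        have hk := k.isLt
        have hmlt := mm.isLt
        rw [if_neg]; omega
    have hS3 : (∑ k : Fin r, (if (mm : ℕ) = 0 ∧ (k : ℕ) = r - 1 then
            Complex.exp (-(Complex.I * θ)) * ω ^ (k : ℕ) else 0))
        = if (mm : ℕ) = 0 then Complex.exp (-(Complex.I * θ)) * ω ^ (r - 1) else 0 := by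
      by_cases hm1 : (mm : ℕ) = 0
      · rw [if_pos hm1, Finset.sum_eq_single_of_mem (⟨r - 1, by omega⟩ : Fin r)
          (Finset.mem_univ _)]
        · rw [if_pos (by refine ⟨hm1, ?_⟩; simp)]
        · intro b _ hb
          rw [if_neg]
          rintro ⟨-, hc⟩
          exact hb (Fin.ext (by first | (simp; omega) | simp | omega))
      · rw [if_neg hm1]
        refine Finset.sum_eq_zero fun k _ => ?_
        rw [if_neg]
        rintro ⟨hc, -⟩
        exact hm1 hc
    have hS4 : (∑ k : Fin r, (if (mm : ℕ) = r - 1 ∧ (k : ℕ) = 0 then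
            Complex.exp (Complex.I * θ) * ω ^ (k : ℕ) else 0))
        = if (mm : ℕ) = r - 1 then Complex.exp (Complex.I * θ) else 0 := by
      by_cases hm1 : (mm : ℕ) = r - 1
      · rw [if_pos hm1, Finset.sum_eq_single_of_mem (⟨0, by omega⟩ : Fin r)
          (Finset.mem_univ _)]
        · rw [if_pos (by refine ⟨hm1, ?_⟩; simp)]
          simp
        · intro b _ hb
          rw [if_neg]
          rintro ⟨-, hc⟩
          exact hb (Fin.ext (by first | (simp; omega) | simp | omega))
      · rw [if_neg hm1]
        refine Finset.sum_eq_zero fun k _ => ?_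
        rw [if_neg]
        rintro ⟨hc, -⟩
        exact hm1 hc
    have hinv : Complex.exp (-(Complex.I * θ)) * ω ^ (r - 1) = ω⁻¹ := by
      have h5 : Complex.exp (-(Complex.I * (θ : ℂ))) = (ω ^ r)⁻¹ := by
        rw [hωr, ← Complex.exp_neg]
      have h6 : ω ^ r = ω ^ (r - 1) * ω := by
        conv_lhs => rw [show r = (r - 1) + 1 by omega]
        rw [pow_succ]
      rw [h5, h6]
      field_simp
    have hmlt := mm.isLt
    rw [hsplit, hS1, hS2, hS3, hS4, hsum, ← hωr]
    by_cases h0 : (mm : ℕ) = 0 <;> by_cases hlast : (mm : ℕ) = r - 1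
    · rw [if_neg (by omega), if_neg (by omega), if_pos h0, if_pos hlast, hinv, h0]
      have e1 : ω ^ r = ω := by rw [show r = 1 by omega, pow_one]
      rw [e1, pow_zero]
      ring
    · rw [if_neg (by omega), if_pos (by omega), if_pos h0, if_neg hlast, hinv, h0]
      norm_num
    · rw [if_pos (by omega), if_neg (by omega), if_neg h0, if_pos hlast, hlast]
      have e1 : ω ^ r = ω * ω ^ (r - 1) := by
        conv_lhs => rw [show r = (r - 1) + 1 by omega]
        rw [pow_succ]; ring
      have e2 : ω ^ (r - 1) = ω * ω ^ (r - 1 - 1) := by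
        conv_lhs => rw [show r - 1 = (r - 1 - 1) + 1 by omega]
        rw [pow_succ]; ring
      rw [e1, e2]
      field_simp
      ring
    · rw [if_pos (by omega), if_pos (by omega), if_neg h0, if_neg hlast]
      have e1 : ω ^ ((mm : ℕ) + 1) = ω * ω ^ (mm : ℕ) := by rw [pow_succ]; ring
      have e2 : ω ^ (mm : ℕ) = ω * ω ^ ((mm : ℕ) - 1) := by
        conv_lhs => rw [show (mm : ℕ) = ((mm : ℕ) - 1) + 1 by omega]
        rw [pow_succ]; ring
      rw [e1, e2]
      field_simp
      ring



lemma eval_charpolyDE {n : ℕ} (M : Matrix (Fin n) (Fin n) ℂ) (x : ℂ) :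
    M.charpoly.eval x = (x • (1 : Matrix (Fin n) (Fin n) ℂ) - M).det := by
  rw [Matrix.charpoly, ← Polynomial.coe_evalRingHom, RingHom.map_det]
  congr 1
  ext i k
  by_cases h : i = k <;>
    simp [Matrix.charmatrix_apply, Matrix.diagonal_apply, h, Matrix.one_apply,
      Matrix.sub_apply, Matrix.smul_apply]

lemma exists_lam_eq (r : ℕ) (hr : 1 ≤ r) (lam : Fin r → ℝ → ℝ)
    (hcp : ∀ θ : ℝ, (deltaMatrix r θ).charpoly =
      ∏ j : Fin r, (X - C ((lam j θ : ℝ) : ℂ))) (θ : ℝ) (j : ℕ) :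
    ∃ i : Fin r, lam i θ = fDE r j θ := by
  obtain ⟨v, hv0, hv⟩ := fDE_eigen r hr j θ
  have hdet : (((fDE r j θ : ℝ) : ℂ) • (1 : Matrix (Fin r) (Fin r) ℂ)
      - deltaMatrix r θ).det = 0 := by
    rw [← Matrix.exists_mulVec_eq_zero_iff]
    refine ⟨v, hv0, ?_⟩
    rw [Matrix.sub_mulVec, Matrix.smul_mulVec, Matrix.one_mulVec, hv, sub_self]
  have h1 : ((deltaMatrix r θ).charpoly).eval ((fDE r j θ : ℝ) : ℂ) = 0 := by
    rw [eval_charpolyDE]; exact hdet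
  rw [hcp θ, Polynomial.eval_prod] at h1
  obtain ⟨i, -, hi⟩ := Finset.prod_eq_zero_iff.mp h1
  simp only [Polynomial.eval_sub, Polynomial.eval_X, Polynomial.eval_C, sub_eq_zero] at hi
  exact ⟨i, by exact_mod_cast hi.symm⟩


lemma fDE_step (r : ℕ) {j : ℕ} (hj : j + 1 < r) {θ : ℝ} (h0 : 0 ≤ θ) (hπ : θ ≤ Real.pi) :
    fDE r j θ ≤ fDE r (j + 1) θ ∧ (0 < θ → θ < Real.pi → fDE r j θ < fDE r (j + 1) θ) := by
  have hπ0 := Real.pi_pos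
  have hrR : (0 : ℝ) < r := by
    have h' : 0 < r := by omega
    exact_mod_cast h'
  have hjr : (j : ℝ) + 1 + 1 ≤ (r : ℝ) := by exact_mod_cast hj
  have key : ∀ A B : ℝ, 0 ≤ A → B ≤ Real.pi * r → A ≤ B →
      (0 < θ → θ < Real.pi → A < B) →
      -2 * Real.cos (A / r) ≤ -2 * Real.cos (B / r) ∧
        (0 < θ → θ < Real.pi → -2 * Real.cos (A / r) < -2 * Real.cos (B / r)) := by
    intro A B hA0 hBπ hAB hABlt
    have hA0' : 0 ≤ A / r := div_nonneg hA0 hrR.le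
    have hBπ' : B / r ≤ Real.pi := by
      rw [div_le_iff₀ hrR]
      nlinarith
    have hAB' : A / r ≤ B / r := by
      rw [div_le_div_iff_of_pos_right hrR]
      exact hAB
    constructor
    · nlinarith [Real.cos_le_cos_of_nonneg_of_le_pi hA0' hBπ' hAB']
    · intro h1 h2
      have hlt' : A / r < B / r := div_lt_div_of_pos_right (hABlt h1 h2) hrR
      nlinarith [Real.strictAntiOn_cos ⟨hA0', hAB'.trans hBπ'⟩ ⟨hA0'.trans hAB', hBπ'⟩ hlt']
  by_cases h : (j + 1) % 2 = r % 2
  · have ht1 : tDE r j = -((j : ℤ) + 1) := if_pos h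
    have ht2 : tDE r (j + 1) = ((j : ℤ) + 1) := if_neg (by omega)
    have hfj : fDE r j θ = -2 * Real.cos ((Real.pi * ((j : ℝ) + 1) - θ) / r) := by
      rw [fDE, ht1, ← Real.cos_neg]
      push_cast
      congr 1
      ring
    have hfj1 : fDE r (j + 1) θ = -2 * Real.cos ((θ + Real.pi * ((j : ℝ) + 1)) / r) := by
      rw [fDE, ht2]
      push_cast
      ring_nf
    rw [hfj, hfj1]
    exact key _ _ (by nlinarith) (by nlinarith) (by nlinarith)
      (fun h1 h2 => by nlinarith)
  · have ht1 : tDE r j = (j : ℤ) := if_neg h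
    have ht2 : tDE r (j + 1) = -((j : ℤ) + 1 + 1) := if_pos (by omega)
    have hfj : fDE r j θ = -2 * Real.cos ((θ + Real.pi * (j : ℝ)) / r) := by
      rw [fDE, ht1]
      push_cast
      ring_nf
    have hfj1 : fDE r (j + 1) θ = -2 * Real.cos ((Real.pi * ((j : ℝ) + 2) - θ) / r) := by
      rw [fDE, ht2, ← Real.cos_neg]
      push_cast
      congr 1
      ring
    rw [hfj, hfj1]
    exact key _ _ (by nlinarith) (by nlinarith) (by nlinarith)
      (fun h1 h2 => by nlinarith)

lemma fDE_mono (r : ℕ) {θ : ℝ} (h0 : 0 ≤ θ) (hπ : θ ≤ Real.pi) :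
    Monotone (fun k : Fin r => fDE r (k : ℕ) θ) := by
  rcases r with - | n
  · exact fun a => a.elim0
  rw [Fin.monotone_iff_le_succ]
  intro i
  have hi := i.isLt
  simp only [Fin.coe_castSucc, Fin.val_succ]
  exact (fDE_step (n + 1) (by omega) h0 hπ).1

lemma fDE_strictMono (r : ℕ) {θ : ℝ} (h0 : 0 < θ) (hπ : θ < Real.pi) :
    StrictMono (fun k : Fin r => fDE r (k : ℕ) θ) := by
  rcases r with - | n
  · exact fun a => a.elim0
  rw [Fin.strictMono_iff_lt_succ]
  intro i
  have hi := i.isLt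
  simp only [Fin.coe_castSucc, Fin.val_succ]
  exact (fDE_step (n + 1) (by omega) h0.le hπ.le).2 h0 hπ

lemma sorted_eqDE {r : ℕ} (g h : Fin r → ℝ) (hg : Monotone g) (hh : Monotone h)
    (heq : Multiset.map g Finset.univ.val = Multiset.map h Finset.univ.val) : g = h := by
  apply List.ofFn_injective
  refine List.Perm.eq_of_sortedLE (List.sortedLE_ofFn_iff.mpr hg)
    (List.sortedLE_ofFn_iff.mpr hh) ?_
  rw [← Multiset.coe_eq_coe]
  rw [Fin.univ_val_map, Fin.univ_val_map] at heq
  exact_mod_cast heq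

lemma roots_prodDE {r : ℕ} (g : Fin r → ℝ) :
    (∏ i : Fin r, (X - C ((g i : ℝ) : ℂ))).roots
      = Multiset.map (fun i => ((g i : ℝ) : ℂ)) Finset.univ.val := by
  rw [Finset.prod_eq_multiset_prod]
  have h1 : Finset.univ.val.map (fun i : Fin r => X - C ((g i : ℝ) : ℂ))
      = Multiset.map (fun a : ℂ => X - C a)
        (Multiset.map (fun i => ((g i : ℝ) : ℂ)) Finset.univ.val) := by
    rw [Multiset.map_map]
    rfl
  rw [h1, Polynomial.roots_multiset_prod_X_sub_C]

lemma lam_eqDE (r : ℕ) (hr : 1 ≤ r) (lam : Fin r → ℝ → ℝ)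
    (hsorted : ∀ θ : ℝ, Monotone fun j => lam j θ)
    (hcp : ∀ θ : ℝ, (deltaMatrix r θ).charpoly =
      ∏ j : Fin r, (X - C ((lam j θ : ℝ) : ℂ))) :
    ∀ θ ∈ Set.Icc (0 : ℝ) Real.pi, ∀ i : Fin r, lam i θ = fDE r (i : ℕ) θ := by
  have hevalL : ∀ (t : ℝ) (x : ℂ) (gg : Fin r → ℝ),
      (∏ i : Fin r, (X - C ((gg i : ℝ) : ℂ))).eval x = ∏ i : Fin r, (x - (gg i : ℂ)) := by
    intro t x gg
    rw [Polynomial.eval_prod]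
    simp
  have hint : ∀ θ ∈ Set.Ioo (0 : ℝ) Real.pi,
      (fun i : Fin r => lam i θ) = fun i : Fin r => fDE r (i : ℕ) θ := by
    intro θ hθ
    apply sorted_eqDE _ _ (hsorted θ) (fDE_mono r hθ.1.le hθ.2.le)
    have hnd : (Multiset.map (fun i : Fin r => fDE r (i : ℕ) θ) Finset.univ.val).Nodup :=
      Finset.univ.nodup.map ((fDE_strictMono r hθ.1 hθ.2).injective)
    symm
    apply Multiset.eq_of_le_of_card_le
    · rw [Multiset.le_iff_count]
      intro x
      by_cases hx : x ∈ Multiset.map (fun i : Fin r => fDE r (i : ℕ) θ) Finset.univ.val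
      · rw [Multiset.count_eq_one_of_mem hnd hx]
        obtain ⟨i, -, hi⟩ := Multiset.mem_map.mp hx
        obtain ⟨i', hi'⟩ := exists_lam_eq r hr lam hcp θ i
        refine Multiset.one_le_count_iff_mem.mpr (Multiset.mem_map.mpr
          ⟨i', Finset.mem_univ_val _, ?_⟩)
        rw [hi', hi]
      · rw [Multiset.count_eq_zero_of_notMem hx]
        exact Nat.zero_le _
    · simp
  intro θ hθ i
  by_cases hin : θ ∈ Set.Ioo (0 : ℝ) Real.pi
  · exact congrFun (hint θ hin) i
  have hfun : (fun i : Fin r => lam i θ) = fun i : Fin r => fDE r (i : ℕ) θ := by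
    apply sorted_eqDE _ _ (hsorted θ) (fDE_mono r hθ.1 hθ.2)
    have hpoly : ∏ i : Fin r, (X - C ((lam i θ : ℝ) : ℂ))
        = ∏ i : Fin r, (X - C ((fDE r (i : ℕ) θ : ℝ) : ℂ)) := by
      apply Polynomial.funext
      intro x
      rw [hevalL θ x (fun i => lam i θ), hevalL θ x (fun i => fDE r (i : ℕ) θ)]
      set F : ℝ → ℂ := fun t => (x • (1 : Matrix (Fin r) (Fin r) ℂ) - deltaMatrix r t).det
        with hF
      set G : ℝ → ℂ := fun t => ∏ i : Fin r, (x - ((fDE r (i : ℕ) t : ℝ) : ℂ)) with hG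
      have hFlam : ∀ t : ℝ, F t = ∏ i : Fin r, (x - ((lam i t : ℝ) : ℂ)) := by
        intro t
        rw [hF]
        simp only
        rw [← eval_charpolyDE, hcp t, hevalL t x (fun i => lam i t)]
      have hFG : ∀ t ∈ Set.Ioo (0 : ℝ) Real.pi, F t = G t := by
        intro t ht
        rw [hFlam t, hG]
        exact Finset.prod_congr rfl fun i _ => by rw [congrFun (hint t ht) i]
      have hFc : Continuous F := by
        apply Continuous.matrix_det
        apply Continuous.sub continuous_const
        apply continuous_matrix
        intro i k
        simp only [deltaMatrix, Matrix.of_apply]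
        apply Continuous.add
        apply Continuous.add
        · exact continuous_const
        · by_cases hc : (i : ℕ) = 0 ∧ (k : ℕ) = r - 1
          · simp only [if_pos hc]
            fun_prop
          · simp only [if_neg hc]
            exact continuous_const
        · by_cases hc : (i : ℕ) = r - 1 ∧ (k : ℕ) = 0
          · simp only [if_pos hc]
            fun_prop
          · simp only [if_neg hc]
            exact continuous_const
      have hGc : Continuous G := by
        rw [hG]
        apply continuous_finset_prod
        intro i _
        apply Continuous.sub continuous_const
        apply Complex.continuous_ofReal.comp
        unfold fDE
        fun_prop
      have hne : (nhdsWithin θ (Set.Ioo (0 : ℝ) Real.pi)).NeBot := by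
        rw [← mem_closure_iff_nhdsWithin_neBot, closure_Ioo (ne_of_lt Real.pi_pos)]
        exact hθ
      have h1 : Filter.Tendsto F (nhdsWithin θ (Set.Ioo (0 : ℝ) Real.pi)) (nhds (F θ)) :=
        (hFc.tendsto θ).mono_left nhdsWithin_le_nhds
      have h2 : Filter.Tendsto G (nhdsWithin θ (Set.Ioo (0 : ℝ) Real.pi)) (nhds (G θ)) :=
        (hGc.tendsto θ).mono_left nhdsWithin_le_nhds
      have hev : F =ᶠ[nhdsWithin θ (Set.Ioo (0 : ℝ) Real.pi)] G :=
        eventually_mem_nhdsWithin.mono fun t ht => hFG t ht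
      have hFGθ : F θ = G θ := tendsto_nhds_unique h1 (h2.congr' hev.symm)
      rw [← hFlam θ]
      rw [hFGθ, hG]
    have hroots := congrArg Polynomial.roots hpoly
    rw [roots_prodDE (fun i => lam i θ), roots_prodDE (fun i => fDE r (i : ℕ) θ)] at hroots
    have h1 : Multiset.map (fun y : ℝ => (y : ℂ))
          (Multiset.map (fun i : Fin r => lam i θ) Finset.univ.val)
        = Multiset.map (fun y : ℝ => (y : ℂ))
          (Multiset.map (fun i : Fin r => fDE r (i : ℕ) θ) Finset.univ.val) := by
      rw [Multiset.map_map, Multiset.map_map]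
      exact hroots
    exact Multiset.map_injective Complex.ofReal_injective h1
  exact congrFun hfun i

end DEaux

open Polynomial in
/-- with λ_1(θ) ≤ ⋯ ≤ λ_r(θ) the eigenvalues of Δ_θ^r (counted with
multiplicity), each λ_j has a one-sided derivative d at each endpoint φ ∈ {0, π}
(from within [0,π]), and |d| = (1/r)·√(4 − λ_j(φ)²). -/
theorem deltaMatrix_eigenvalue_deriv_endpoints (r : ℕ) (hr : 1 ≤ r)
    (lam : Fin r → ℝ → ℝ)
    (hsorted : ∀ θ : ℝ, Monotone fun j => lam j θ)
    (hcp : ∀ θ : ℝ, (deltaMatrix r θ).charpoly =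
      ∏ j : Fin r, (X - C ((lam j θ : ℝ) : ℂ))) :
    ∀ j : Fin r,
      (∃ d : ℝ, HasDerivWithinAt (lam j) d (Set.Icc 0 Real.pi) 0 ∧
        |d| = (1 / (r : ℝ)) * Real.sqrt (4 - (lam j 0) ^ 2)) ∧
      (∃ d : ℝ, HasDerivWithinAt (lam j) d (Set.Icc 0 Real.pi) Real.pi ∧
        |d| = (1 / (r : ℝ)) * Real.sqrt (4 - (lam j Real.pi) ^ 2)) := by
  intro j
  have hlam := lam_eqDE r hr lam hsorted hcp
  have hπ0 := Real.pi_pos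
  have hrR : (0 : ℝ) < r := by
    have h' : 0 < r := hr
    exact_mod_cast h'
  have main : ∀ φ ∈ Set.Icc (0 : ℝ) Real.pi,
      ∃ d : ℝ, HasDerivWithinAt (lam j) d (Set.Icc 0 Real.pi) φ ∧
        |d| = (1 / (r : ℝ)) * Real.sqrt (4 - (lam j φ) ^ 2) := by
    intro φ hφ
    have h1 : HasDerivAt (fun t : ℝ => (t + Real.pi * (tDE r (j : ℕ) : ℝ)) / r)
        (1 / r) φ := by
      have := ((hasDerivAt_id φ).add_const (Real.pi * (tDE r (j : ℕ) : ℝ))).div_const (r : ℝ)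
      simpa [one_div] using this
    have h2 := (Real.hasDerivAt_cos ((φ + Real.pi * (tDE r (j : ℕ) : ℝ)) / r)).comp φ h1
    have hD : HasDerivAt (fun t : ℝ => fDE r (j : ℕ) t)
        (-2 * (-Real.sin ((φ + Real.pi * (tDE r (j : ℕ) : ℝ)) / r) * (1 / r))) φ := by
      have h3 := h2.const_mul (-2 : ℝ)
      simpa [fDE, Function.comp] using h3
    refine ⟨_, (hD.hasDerivWithinAt).congr (fun t ht => hlam t ht j)
      (hlam φ hφ j), ?_⟩
    have hval : lam j φ = -2 * Real.cos ((φ + Real.pi * (tDE r (j : ℕ) : ℝ)) / r) := by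
      rw [hlam φ hφ j, fDE]
    have h4 : 4 - (lam j φ) ^ 2
        = (2 * Real.sin ((φ + Real.pi * (tDE r (j : ℕ) : ℝ)) / r)) ^ 2 := by
      rw [hval]
      nlinarith [Real.sin_sq_add_cos_sq ((φ + Real.pi * (tDE r (j : ℕ) : ℝ)) / r)]
    rw [h4, Real.sqrt_sq_eq_abs]
    have h5 : (-2 * (-Real.sin ((φ + Real.pi * (tDE r (j : ℕ) : ℝ)) / r) * (1 / (r : ℝ))))
        = (2 * Real.sin ((φ + Real.pi * (tDE r (j : ℕ) : ℝ)) / r)) / r := by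
      ring
    rw [h5, abs_div, abs_of_pos hrR]
    ring
  exact ⟨main 0 ⟨le_refl _, hπ0.le⟩, main Real.pi ⟨hπ0.le, le_refl _⟩⟩
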